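/- The function g is a bijection of ℤ onto itself (an 'infinite permutation' of the integers). -/
import Mathlib


/-- The mapping generating the original Collatz problem. -/
def g (n : ℤ) : ℤ :=
  if n % 3 = 0 then 2 * n / 3
  else if n % 3 = 1 then (4 * n - 1) / 3
  else (4 * n + 1) / 3

def ginv (n : ℤ) : ℤ :=
  if n % 2 = 0 then 3 * n / 2
  else if n % 4 = 1 then (3 * n + 1) / 4
  else (3 * n - 1) / 4

/-- `g` is a bijection of `ℤ` onto itself (an "infinite permutation"). -/
theorem g_bijective : Function.Bijective g := by
  apply Function.bijective_iff_has_inverse.mpr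
  refine ⟨ginv, fun n => ?_, fun n => ?_⟩ <;>
    simp only [g, ginv] <;> split_ifs <;> omega
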